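/- Let v_1 = (1,0), v_2 = (0,1), v_3 = (1,1), v_4 = (2,1), v_5 = (3,1), v_6 = (3,2) in ℤ² (the positive roots of the root system G2 written in the basis of the simple roots α = (1,0) and β = (0,1)), and let K : ℤ² → ℕ send v to the number of 6-tuples (n_1,…,n_6) ∈ ℕ⁶ with ∑_{r=1}^6 n_r·v_r = v. Then K(4,4) = 13, K(5,5) = 20, and K(6,6) = 31; in particular K(5,5)² < K(4,4)·K(6,6), so the Kostant partition function of type G2 is not discretely log-concave. -/

import Mathlib

open Finset

/-- The positive roots of `G₂`, written in the basis of the simple roots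
`α = (1,0)` (short) and `β = (0,1)` (long):
`α, β, α+β, 2α+β, 3α+β, 3α+2β`. -/
def g2Roots : Fin 6 → ℤ × ℤ := ![(1, 0), (0, 1), (1, 1), (2, 1), (3, 1), (3, 2)]

/-- The Kostant partition function of type `G₂`: the number of 6-tuples
`(n_1,…,n_6) ∈ ℕ⁶` with `∑ n_r v_r = v`. -/
noncomputable def kostantG2 (v : ℤ × ℤ) : ℕ :=
  Set.ncard {c : Fin 6 → ℕ | ∑ r, (c r : ℤ) • g2Roots r = v}

/-- Auxiliary finset of 4-tuples counted by `kostantG2 (a, a)`. -/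
def g2Aux (a : ℕ) : Finset (ℕ × ℕ × ℕ × ℕ) :=
  ((Finset.range (a+1)) ×ˢ (Finset.range (a+1)) ×ˢ (Finset.range (a+1)) ×ˢ
    (Finset.range (a+1))).filter
    (fun p => p.1 + 2*p.2.1 + 3*p.2.2.1 + 3*p.2.2.2 ≤ a ∧
      p.1 + p.2.1 + p.2.2.1 + 2*p.2.2.2 ≤ a)

lemma vec6_0 {α : Type*} (v0 v1 v2 v3 v4 v5 : α) : ![v0,v1,v2,v3,v4,v5] 0 = v0 := rfl
lemma vec6_1 {α : Type*} (v0 v1 v2 v3 v4 v5 : α) : ![v0,v1,v2,v3,v4,v5] 1 = v1 := rfl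
lemma vec6_2 {α : Type*} (v0 v1 v2 v3 v4 v5 : α) : ![v0,v1,v2,v3,v4,v5] 2 = v2 := rfl
lemma vec6_3 {α : Type*} (v0 v1 v2 v3 v4 v5 : α) : ![v0,v1,v2,v3,v4,v5] 3 = v3 := rfl
lemma vec6_4 {α : Type*} (v0 v1 v2 v3 v4 v5 : α) : ![v0,v1,v2,v3,v4,v5] 4 = v4 := rfl
lemma vec6_5 {α : Type*} (v0 v1 v2 v3 v4 v5 : α) : ![v0,v1,v2,v3,v4,v5] 5 = v5 := rfl

lemma kostant_eq_filter (a : ℕ) : kostantG2 ((a:ℤ), (a:ℤ)) =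
    ((Fintype.piFinset fun _ : Fin 6 => Finset.range (a+1)).filter
      (fun c => c 0 + c 2 + 2*c 3 + 3*c 4 + 3*c 5 = a ∧
        c 1 + c 2 + c 3 + c 4 + 2*c 5 = a)).card := by
  rw [kostantG2, ← Set.ncard_coe_finset]
  congr 1
  ext c
  simp only [Set.mem_setOf_eq, Finset.coe_filter, Fintype.mem_piFinset, Finset.mem_range,
    Nat.lt_succ_iff, Fin.sum_univ_six,
    show g2Roots 0 = (1,0) from rfl, show g2Roots 1 = (0,1) from rfl,
    show g2Roots 2 = (1,1) from rfl, show g2Roots 3 = (2,1) from rfl,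
    show g2Roots 4 = (3,1) from rfl, show g2Roots 5 = (3,2) from rfl,
    Prod.ext_iff, Prod.smul_mk, smul_eq_mul, Prod.mk_add_mk]
  constructor
  · rintro ⟨h1, h2⟩
    have b0 : c 0 ≤ a := by omega
    have b1 : c 1 ≤ a := by omega
    have b2 : c 2 ≤ a := by omega
    have b3 : c 3 ≤ a := by omega
    have b4 : c 4 ≤ a := by omega
    have b5 : c 5 ≤ a := by omega
    refine ⟨fun i => ?_, by omega, by omega⟩
    fin_cases i <;> first | exact b0 | exact b1 | exact b2 | exact b3 | exact b4 | exact b5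
  · rintro ⟨hb, h1, h2⟩
    constructor <;> omega

lemma kostant_eq_aux (a : ℕ) : kostantG2 ((a:ℤ), (a:ℤ)) = (g2Aux a).card := by
  rw [kostant_eq_filter]
  refine Finset.card_nbij' (fun c => (c 2, c 3, c 4, c 5))
    (fun p => ![a - (p.1 + 2*p.2.1 + 3*p.2.2.1 + 3*p.2.2.2),
      a - (p.1 + p.2.1 + p.2.2.1 + 2*p.2.2.2), p.1, p.2.1, p.2.2.1, p.2.2.2])
    ?_ ?_ ?_ ?_
  · rintro c hc
    simp only [Finset.mem_coe, Finset.mem_filter, Fintype.mem_piFinset, Finset.mem_range,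
      Nat.lt_succ_iff] at hc
    obtain ⟨hb, h1, h2⟩ := hc
    simp only [Finset.mem_coe, g2Aux, Finset.mem_filter, Finset.mem_product, Finset.mem_range,
      Nat.lt_succ_iff]
    exact ⟨⟨hb 2, hb 3, hb 4, hb 5⟩, by omega, by omega⟩
  · rintro ⟨x, y, z, w⟩ hp
    simp only [Finset.mem_coe, g2Aux, Finset.mem_filter, Finset.mem_product, Finset.mem_range,
      Nat.lt_succ_iff] at hp
    obtain ⟨⟨hx, hy, hz, hw⟩, h1, h2⟩ := hp
    simp only [Finset.mem_coe, Finset.mem_filter, Fintype.mem_piFinset, Finset.mem_range, Nat.lt_succ_iff]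
    refine ⟨fun i => ?_, ?_, ?_⟩
    · fin_cases i <;> simp [Matrix.cons_val_succ, vec6_0, vec6_1, vec6_2, vec6_3, vec6_4, vec6_5] <;> omega
    · simp [Matrix.cons_val_succ, vec6_0, vec6_1, vec6_2, vec6_3, vec6_4, vec6_5]; omega
    · simp [Matrix.cons_val_succ, vec6_0, vec6_1, vec6_2, vec6_3, vec6_4, vec6_5]; omega
  · rintro c hc
    simp only [Finset.mem_coe, Finset.mem_filter, Fintype.mem_piFinset, Finset.mem_range,
      Nat.lt_succ_iff] at hc
    obtain ⟨hb, h1, h2⟩ := hc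
    funext i
    fin_cases i <;> simp [Matrix.cons_val_succ, vec6_0, vec6_1, vec6_2, vec6_3, vec6_4, vec6_5] <;> omega
  · rintro ⟨x, y, z, w⟩ hp
    rfl

set_option maxRecDepth 40000 in
lemma g2Aux4 : (g2Aux 4).card = 13 := by decide

set_option maxRecDepth 40000 in
lemma g2Aux5 : (g2Aux 5).card = 20 := by decide

set_option maxRecDepth 40000 in
lemma g2Aux6 : (g2Aux 6).card = 31 := by decide

/-- The Kostant partition function of type `G₂` takes the values
`13, 20, 31` at `4(α+β), 5(α+β), 6(α+β)`; since `20² < 13·31`, it is not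
discretely log-concave. -/
theorem g2_kostant_not_log_concave :
    kostantG2 (4, 4) = 13 ∧ kostantG2 (5, 5) = 20 ∧ kostantG2 (6, 6) = 31 ∧
    kostantG2 (5, 5) ^ 2 < kostantG2 (4, 4) * kostantG2 (6, 6) := by
  have h4 : kostantG2 (4, 4) = 13 := by
    have := kostant_eq_aux 4; rw [g2Aux4] at this; exact_mod_cast this
  have h5 : kostantG2 (5, 5) = 20 := by
    have := kostant_eq_aux 5; rw [g2Aux5] at this; exact_mod_cast this
  have h6 : kostantG2 (6, 6) = 31 := by
    have := kostant_eq_aux 6; rw [g2Aux6] at this; exact_mod_cast this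
  refine ⟨h4, h5, h6, ?_⟩
  rw [h4, h5, h6]; norm_num
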